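/- arXiv:2604.11254 — 2 statements merged into one kernel-verified Lean document; each statement's English description precedes it below -/
import Mathlib

section
/- Local controllability of d_proj in the lateral direction (vanishing length of the geodesics in Fig. 4): For the constant cost C ≡ 1, let p₀ := ((0,0), (1,0)) and, for ε > 0, p₁^ε := ((0, ε), (1,0)). Then for every α ∈ (0, π/2] one has d_proj([p₀],[p₁^ε]) ≤ d_F₀(p₀, p₁^ε) ≤ 4α + ξ·ε / sin α. In particular d_proj([p₀],[p₁^ε]) → 0 as ε ↓ 0, in contrast to d_c which stays bounded below by π. -/
open Set MeasureTheory
open scoped ENNReal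

noncomputable section

/-- The orientation vector `n(θ) = (cos θ, sin θ)`. -/
def nvec (θ : ℝ) : ℝ × ℝ := (Real.cos θ, Real.sin θ)

/-- Euclidean dot product on `ℝ × ℝ`. -/
def dot (a b : ℝ × ℝ) : ℝ := a.1 * b.1 + a.2 * b.2

/-- Euclidean norm on `ℝ × ℝ`. -/
def enorm2 (v : ℝ × ℝ) : ℝ := Real.sqrt (v.1 ^ 2 + v.2 ^ 2)

/-- A point of the space of positions and orientations: a position in `ℝ²`
together with an orientation vector in `ℝ²` (intended to be a unit vector). -/
abbrev Pt := (ℝ × ℝ) × (ℝ × ℝ)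

/-- The antipode `p̄ = (x, -n)` of a point `p = (x, n)`. -/
def antipode (p : Pt) : Pt := (p.1, -p.2)

/-- A candidate curve, given by a spatial part `x` and an angular part `θ`. -/
structure Curve where
  x : ℝ → ℝ × ℝ
  th : ℝ → ℝ

/-- A map is piecewise continuously differentiable on `[0,1]`: it is continuous
on `[0,1]` and, off a finite set, differentiable with continuous derivative. -/
def PiecewiseC1 {E : Type*} [NormedAddCommGroup E] [NormedSpace ℝ E] (f : ℝ → E) : Prop :=
  ContinuousOn f (Icc 0 1) ∧
    ∃ s : Finset ℝ, ∀ t ∈ Icc (0 : ℝ) 1 \ (s : Set ℝ),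
      DifferentiableAt ℝ f t ∧ ContinuousAt (deriv f) t

namespace Curve

/-- Both components of the curve are piecewise `C¹`. -/
def Admissible (γ : Curve) : Prop := PiecewiseC1 γ.x ∧ PiecewiseC1 γ.th

/-- The spatial control `u¹(t) = ẋ(t) ⬝ n(θ(t))`. -/
def u1 (γ : Curve) (t : ℝ) : ℝ := dot (deriv γ.x t) (nvec (γ.th t))

/-- The angular control `u³(t) = θ̇(t)`. -/
def u3 (γ : Curve) (t : ℝ) : ℝ := deriv γ.th t

/-- Horizontality: wherever the spatial derivative exists,
`ẋ(t) ∈ span {n(θ(t))}`. -/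
def Horizontal (γ : Curve) : Prop :=
  ∀ t ∈ Icc (0 : ℝ) 1, DifferentiableAt ℝ γ.x t →
    ∃ c : ℝ, deriv γ.x t = c • nvec (γ.th t)

/-- Boundary conditions: the curve joins `p₀` to `p₁` (the angular boundary
conditions hold modulo `2π`, which is expressed via the orientation vectors). -/
def Joins (γ : Curve) (p₀ p₁ : Pt) : Prop :=
  γ.x 0 = p₀.1 ∧ γ.x 1 = p₁.1 ∧ nvec (γ.th 0) = p₀.2 ∧ nvec (γ.th 1) = p₁.2

end Curve

/-- The length `L(γ) = ∫₀¹ C(x(t), n(θ(t))) √(ξ² u¹(t)² + u³(t)²) dt`. -/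
def length (ξ : ℝ) (C : Pt → ℝ) (γ : Curve) : ℝ :=
  ∫ t in (0 : ℝ)..1,
    C (γ.x t, nvec (γ.th t)) * Real.sqrt (ξ ^ 2 * γ.u1 t ^ 2 + γ.u3 t ^ 2)

/-- `Γ₀(p₀,p₁)`: horizontal admissible candidate curves from `p₀` to `p₁`. -/
def Gamma0 (p₀ p₁ : Pt) : Set Curve :=
  {γ | γ.Admissible ∧ γ.Horizontal ∧ γ.Joins p₀ p₁}

/-- `Γ₀⁺(p₀,p₁)`: members of `Γ₀(p₀,p₁)` with `u¹ ≥ 0` wherever defined. -/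
def Gamma0plus (p₀ p₁ : Pt) : Set Curve :=
  {γ ∈ Gamma0 p₀ p₁ | ∀ t ∈ Icc (0 : ℝ) 1, DifferentiableAt ℝ γ.x t → 0 ≤ γ.u1 t}

/-- `Γ₀⁻(p₀,p₁)`: members of `Γ₀(p₀,p₁)` with `u¹ ≤ 0` wherever defined. -/
def Gamma0minus (p₀ p₁ : Pt) : Set Curve :=
  {γ ∈ Gamma0 p₀ p₁ | ∀ t ∈ Icc (0 : ℝ) 1, DifferentiableAt ℝ γ.x t → γ.u1 t ≤ 0}

/-- The sub-Riemannian distance `d_F₀` (with `inf ∅ = +∞`). -/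
def dF0 (ξ : ℝ) (C : Pt → ℝ) (p₀ p₁ : Pt) : ℝ≥0∞ :=
  ⨅ γ ∈ Gamma0 p₀ p₁, ENNReal.ofReal (length ξ C γ)

/-- The forward (asymmetric) Finsler distance `d_F₀⁺` (with `inf ∅ = +∞`). -/
def dF0plus (ξ : ℝ) (C : Pt → ℝ) (p₀ p₁ : Pt) : ℝ≥0∞ :=
  ⨅ γ ∈ Gamma0plus p₀ p₁, ENNReal.ofReal (length ξ C γ)

/-- The backward Finsler distance `d_F₀⁻` (with `inf ∅ = +∞`). -/
def dF0minus (ξ : ℝ) (C : Pt → ℝ) (p₀ p₁ : Pt) : ℝ≥0∞ :=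
  ⨅ γ ∈ Gamma0minus p₀ p₁, ENNReal.ofReal (length ξ C γ)

/-- The cusp-free model `d_c` on the projective line bundle:
the minimum of `d_F₀⁺` over representatives `q₀ ∈ [p₀] = {p₀, p̄₀}` and
`q₁ ∈ [p₁] = {p₁, p̄₁}`. -/
def dc (ξ : ℝ) (C : Pt → ℝ) (p₀ p₁ : Pt) : ℝ≥0∞ :=
  min (min (dF0plus ξ C p₀ p₁) (dF0plus ξ C p₀ (antipode p₁)))
      (min (dF0plus ξ C (antipode p₀) p₁) (dF0plus ξ C (antipode p₀) (antipode p₁)))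

/-- The projective line bundle model `d_proj`:
the minimum of `d_F₀` over representatives of the classes. -/
def dproj (ξ : ℝ) (C : Pt → ℝ) (p₀ p₁ : Pt) : ℝ≥0∞ :=
  min (min (dF0 ξ C p₀ p₁) (dF0 ξ C p₀ (antipode p₁)))
      (min (dF0 ξ C (antipode p₀) p₁) (dF0 ξ C (antipode p₀) (antipode p₁)))

/-- `Γᶜ([p₀],[p₁])`: curves between representatives of the two classes whose
spatial control has a constant sign (nonnegative or nonpositive everywhere). -/
def GammaC (p₀ p₁ : Pt) : Set Curve :=
  (Gamma0plus p₀ p₁ ∪ Gamma0minus p₀ p₁) ∪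
  (Gamma0plus p₀ (antipode p₁) ∪ Gamma0minus p₀ (antipode p₁)) ∪
  (Gamma0plus (antipode p₀) p₁ ∪ Gamma0minus (antipode p₀) p₁) ∪
  (Gamma0plus (antipode p₀) (antipode p₁) ∪ Gamma0minus (antipode p₀) (antipode p₁))

/-- The cost function `C` is antipodally symmetric. -/
def AntipodallySymmetric (C : Pt → ℝ) : Prop :=
  ∀ x n : ℝ × ℝ, C (x, n) = C (x, -n)

/-- Distance on the circle: `ρ(θ₀, θ₁) = min_{k ∈ ℤ} |θ₁ - θ₀ + 2πk|`. -/
def rho (θ₀ θ₁ : ℝ) : ℝ :=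
  sInf (Set.range fun k : ℤ => |θ₁ - θ₀ + 2 * Real.pi * k|)

namespace Lateral

/-! ### The cubic smoothstep and its clamped version -/

/-- Cubic smoothstep. -/
def S (u : ℝ) : ℝ := 3*u^2 - 2*u^3

/-- Derivative of the cubic smoothstep. -/
def DS (u : ℝ) : ℝ := 6*u - 6*u^2

lemma S_hasDerivAt (u : ℝ) : HasDerivAt S (DS u) u := by
  have h : HasDerivAt (fun u : ℝ => 3*u^2 - 2*u^3)
      (3*((2:ℕ)*u^(2-1)) - 2*((3:ℕ)*u^(3-1))) u :=
    (HasDerivAt.const_mul (3:ℝ) (hasDerivAt_pow 2 u)).sub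
      (HasDerivAt.const_mul (2:ℝ) (hasDerivAt_pow 3 u))
  have e : DS u = 3*((2:ℕ)*u^(2-1)) - 2*((3:ℕ)*u^(3-1)) := by
    unfold DS; push_cast; ring
  rw [e]; exact h

lemma S_continuous : Continuous S := by unfold S; continuity
lemma DS_continuous : Continuous DS := by unfold DS; continuity

lemma S_zero : S 0 = 0 := by norm_num [S]
lemma S_one : S 1 = 1 := by norm_num [S]
lemma DS_zero : DS 0 = 0 := by norm_num [DS]
lemma DS_one : DS 1 = 0 := by norm_num [DS]

lemma DS_nonneg {u : ℝ} (h0 : 0 ≤ u) (h1 : u ≤ 1) : 0 ≤ DS u := by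
  unfold DS; nlinarith

/-- Clamped smoothstep. -/
noncomputable def Sc (u : ℝ) : ℝ := if u ≤ 0 then 0 else if u ≤ 1 then S u else 1

/-- Derivative of the clamped smoothstep. -/
noncomputable def DSc (u : ℝ) : ℝ := if u ≤ 0 then 0 else if u ≤ 1 then DS u else 0

lemma Sc_nonpos {u : ℝ} (h : u ≤ 0) : Sc u = 0 := if_pos h

lemma Sc_ge_one {u : ℝ} (h : 1 ≤ u) : Sc u = 1 := by
  unfold Sc; split_ifs with h1 h2
  · linarith
  · have : u = 1 := le_antisymm h2 h
    rw [this, S_one]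
  · rfl

lemma Sc_mem {u : ℝ} (h0 : 0 ≤ u) (h1 : u ≤ 1) : Sc u = S u := by
  unfold Sc; split_ifs with ha
  · have : u = 0 := le_antisymm ha h0
    rw [this, S_zero]
  · rfl

lemma DSc_nonpos {u : ℝ} (h : u ≤ 0) : DSc u = 0 := if_pos h

lemma DSc_ge_one {u : ℝ} (h : 1 ≤ u) : DSc u = 0 := by
  unfold DSc; split_ifs with h1 h2
  · rfl
  · have : u = 1 := le_antisymm h2 h
    rw [this, DS_one]
  · rfl

lemma DSc_mem {u : ℝ} (h0 : 0 ≤ u) (h1 : u ≤ 1) : DSc u = DS u := by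
  unfold DSc; split_ifs with ha
  · have : u = 0 := le_antisymm ha h0
    rw [this, DS_zero]
  · rfl

/-- Gluing lemma for derivatives. -/
lemma glue {E : Type*} [NormedAddCommGroup E] [NormedSpace ℝ E]
    {f g h : ℝ → E} {v : E} {m c d : ℝ} (hmc : m < c) (hcd : c < d)
    (hg : HasDerivAt g v c) (hh : HasDerivAt h v c)
    (hfg : ∀ t, m < t → t ≤ c → f t = g t) (hfh : ∀ t, c ≤ t → t < d → f t = h t) :
    HasDerivAt f v c := by
  have h1 : HasDerivWithinAt f v (Iic c) c := by
    refine (hg.hasDerivWithinAt).congr_of_eventuallyEq ?_ (hfg c hmc le_rfl)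
    filter_upwards [Ioc_mem_nhdsLE hmc] with t ht using hfg t ht.1 ht.2
  have h2 : HasDerivWithinAt f v (Ici c) c := by
    refine (hh.hasDerivWithinAt).congr_of_eventuallyEq ?_ (hfh c le_rfl hcd)
    filter_upwards [Ico_mem_nhdsGE hcd] with t ht using hfh t ht.1 ht.2
  have h3 := h1.union h2
  rw [Iic_union_Ici] at h3
  exact h3.hasDerivAt Filter.univ_mem

lemma Sc_hasDerivAt (u : ℝ) : HasDerivAt Sc (DSc u) u := by
  rcases lt_trichotomy u 0 with h | h | h
  · have ev : Sc =ᶠ[nhds u] fun _ => (0:ℝ) := by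
      filter_upwards [Iio_mem_nhds h] with t ht using Sc_nonpos (le_of_lt ht)
    rw [DSc_nonpos h.le]
    exact (hasDerivAt_const u (0:ℝ)).congr_of_eventuallyEq ev
  · subst h
    rw [DSc_nonpos le_rfl]
    refine glue (m := -1) (d := 1) (by norm_num) (by norm_num)
      (hasDerivAt_const 0 (0:ℝ)) (DS_zero ▸ S_hasDerivAt 0) ?_ ?_
    · intro t _ ht; exact Sc_nonpos ht
    · intro t h0 h1; exact Sc_mem h0 h1.le
  · rcases lt_trichotomy u 1 with h1 | h1 | h1
    · have ev : Sc =ᶠ[nhds u] S := by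
        filter_upwards [Ioo_mem_nhds h h1] with t ht using Sc_mem ht.1.le ht.2.le
      rw [DSc_mem h.le h1.le]
      exact (S_hasDerivAt u).congr_of_eventuallyEq ev
    · subst h1
      rw [DSc_ge_one le_rfl]
      refine glue (m := 0) (d := 2) (by norm_num) (by norm_num)
        (DS_one ▸ S_hasDerivAt 1) (hasDerivAt_const 1 (1:ℝ)) ?_ ?_
      · intro t h0 ht; exact Sc_mem h0.le ht
      · intro t ht _; exact Sc_ge_one ht
    · have ev : Sc =ᶠ[nhds u] fun _ => (1:ℝ) := by
        filter_upwards [Ioi_mem_nhds h1] with t ht using Sc_ge_one (le_of_lt ht)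
      rw [DSc_ge_one h1.le]
      exact (hasDerivAt_const u (1:ℝ)).congr_of_eventuallyEq ev

lemma Sc_continuous : Continuous Sc :=
  continuous_iff_continuousAt.mpr fun u =>
    (Sc_hasDerivAt u).differentiableAt.continuousAt

lemma DSc_continuous : Continuous DSc := by
  unfold DSc
  have hinner : Continuous fun u : ℝ => if u ≤ 1 then DS u else 0 := by
    exact Continuous.if_le (f := fun u : ℝ => u) (g := fun _ => (1:ℝ))
      (f' := DS) (g' := fun _ => (0:ℝ))
      DS_continuous continuous_const continuous_id continuous_const
      (by intro u hu; norm_num at hu ⊢; rw [hu]; norm_num [DS_one])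
  exact Continuous.if_le (f := fun u : ℝ => u) (g := fun _ => (0:ℝ))
    (f' := fun _ => (0:ℝ)) (g' := fun u => if u ≤ 1 then DS u else 0)
    continuous_const hinner continuous_id continuous_const
    (by intro u hu; norm_num at hu ⊢; rw [hu]; norm_num [DS_zero])

lemma lin_hasDerivAt (k t : ℝ) : HasDerivAt (fun t : ℝ => 5*t - k) 5 t := by
  simpa using (HasDerivAt.const_mul (5:ℝ) (hasDerivAt_id t)).sub_const k

lemma Sc5_hasDerivAt (k t : ℝ) :
    HasDerivAt (fun t => Sc (5*t - k)) (DSc (5*t - k) * 5) t :=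
  HasDerivAt.comp t (h₂ := Sc) (Sc_hasDerivAt (5*t - k)) (lin_hasDerivAt k t)

lemma S5_hasDerivAt (k t : ℝ) :
    HasDerivAt (fun t => S (5*t - k)) (DS (5*t - k) * 5) t :=
  HasDerivAt.comp t (h₂ := S) (S_hasDerivAt (5*t - k)) (lin_hasDerivAt k t)




/-! ### The explicit curve -/

noncomputable def xx (r α : ℝ) (t : ℝ) : ℝ × ℝ :=
  (r * Sc (5*t - 1)) • (Real.cos α, Real.sin α)
    - (r * Sc (5*t - 3)) • (Real.cos α, -Real.sin α)

noncomputable def xx' (r α : ℝ) (t : ℝ) : ℝ × ℝ :=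
  (r * (DSc (5*t - 1) * 5)) • (Real.cos α, Real.sin α)
    - (r * (DSc (5*t - 3) * 5)) • (Real.cos α, -Real.sin α)

noncomputable def tt (α : ℝ) (t : ℝ) : ℝ :=
  α * Sc (5*t - 0) - 2*α * Sc (5*t - 2) + α * Sc (5*t - 4)

noncomputable def tt' (α : ℝ) (t : ℝ) : ℝ :=
  α * (DSc (5*t - 0) * 5) - 2*α * (DSc (5*t - 2) * 5) + α * (DSc (5*t - 4) * 5)

lemma xx_hasDerivAt (r α t : ℝ) : HasDerivAt (xx r α) (xx' r α t) t := by
  unfold xx xx'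
  exact ((HasDerivAt.const_mul r (Sc5_hasDerivAt 1 t)).smul_const _).sub
    ((HasDerivAt.const_mul r (Sc5_hasDerivAt 3 t)).smul_const _)

lemma tt_hasDerivAt (α t : ℝ) : HasDerivAt (tt α) (tt' α t) t := by
  unfold tt tt'
  exact ((HasDerivAt.const_mul α (Sc5_hasDerivAt 0 t)).sub
    (HasDerivAt.const_mul (2*α) (Sc5_hasDerivAt 2 t))).add
    (HasDerivAt.const_mul α (Sc5_hasDerivAt 4 t))

lemma cont_lin (k : ℝ) : Continuous fun t : ℝ => 5*t - k := by continuity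

lemma xx'_continuous (r α : ℝ) : Continuous (xx' r α) := by
  unfold xx'
  exact ((continuous_const.mul ((DSc_continuous.comp (cont_lin 1)).mul continuous_const)).smul
      continuous_const).sub
    ((continuous_const.mul ((DSc_continuous.comp (cont_lin 3)).mul continuous_const)).smul
      continuous_const)

lemma tt'_continuous (α : ℝ) : Continuous (tt' α) := by
  unfold tt'
  exact ((continuous_const.mul ((DSc_continuous.comp (cont_lin 0)).mul continuous_const)).sub
    (continuous_const.mul ((DSc_continuous.comp (cont_lin 2)).mul continuous_const))).add
    (continuous_const.mul ((DSc_continuous.comp (cont_lin 4)).mul continuous_const))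

lemma tt_continuous (α : ℝ) : Continuous (tt α) :=
  continuous_iff_continuousAt.mpr fun t =>
    (tt_hasDerivAt α t).differentiableAt.continuousAt

lemma deriv_xx (r α : ℝ) : deriv (xx r α) = xx' r α :=
  funext fun t => (xx_hasDerivAt r α t).deriv

lemma deriv_tt (α : ℝ) : deriv (tt α) = tt' α :=
  funext fun t => (tt_hasDerivAt α t).deriv




/-! ### The integrand and membership -/

noncomputable def II (ξ r α : ℝ) (t : ℝ) : ℝ :=
  Real.sqrt (ξ^2 * (dot (xx' r α t) (nvec (tt α t)))^2 + (tt' α t)^2)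

lemma II_continuous (ξ r α : ℝ) : Continuous (II ξ r α) := by
  unfold II
  apply Real.continuous_sqrt.comp
  apply Continuous.add
  · apply continuous_const.mul
    apply Continuous.pow
    unfold dot nvec
    exact ((continuous_fst.comp (xx'_continuous r α)).mul
        (Real.continuous_cos.comp (tt_continuous α))).add
      ((continuous_snd.comp (xx'_continuous r α)).mul
        (Real.continuous_sin.comp (tt_continuous α)))
  · exact (tt'_continuous α).pow 2

lemma pc1_xx (r α : ℝ) : PiecewiseC1 (xx r α) := by
  refine ⟨fun t _ => ((xx_hasDerivAt r α t).differentiableAt).continuousAt.continuousWithinAt,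
    ∅, fun t _ => ⟨(xx_hasDerivAt r α t).differentiableAt, ?_⟩⟩
  rw [deriv_xx]
  exact (xx'_continuous r α).continuousAt

lemma pc1_tt (α : ℝ) : PiecewiseC1 (tt α) := by
  refine ⟨fun t _ => ((tt_hasDerivAt α t).differentiableAt).continuousAt.continuousWithinAt,
    ∅, fun t _ => ⟨(tt_hasDerivAt α t).differentiableAt, ?_⟩⟩
  rw [deriv_tt]
  exact (tt'_continuous α).continuousAt

lemma horizontal (r α : ℝ) : Curve.Horizontal ⟨xx r α, tt α⟩ := by
  intro t _ _
  show ∃ c : ℝ, deriv (xx r α) t = c • nvec (tt α t)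
  rw [deriv_xx]
  unfold xx'
  by_cases h1 : t ≤ 1/5
  · refine ⟨0, ?_⟩
    rw [DSc_nonpos (show 5*t - 1 ≤ 0 by linarith), DSc_nonpos (show 5*t - 3 ≤ 0 by linarith)]
    simp
  · push_neg at h1
    by_cases h2 : t ≤ 2/5
    · have htt : tt α t = α := by
        unfold tt
        rw [Sc_ge_one (show (1:ℝ) ≤ 5*t - 0 by linarith),
            Sc_nonpos (show 5*t - 2 ≤ 0 by linarith),
            Sc_nonpos (show 5*t - 4 ≤ 0 by linarith)]
        ring
      refine ⟨r * (DSc (5*t - 1) * 5), ?_⟩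
      rw [htt, DSc_nonpos (show 5*t - 3 ≤ 0 by linarith)]
      simp [nvec]
    · push_neg at h2
      by_cases h3 : t ≤ 3/5
      · refine ⟨0, ?_⟩
        rw [DSc_ge_one (show (1:ℝ) ≤ 5*t - 1 by linarith),
            DSc_nonpos (show 5*t - 3 ≤ 0 by linarith)]
        simp
      · push_neg at h3
        by_cases h4 : t ≤ 4/5
        · have htt : tt α t = -α := by
            unfold tt
            rw [Sc_ge_one (show (1:ℝ) ≤ 5*t - 0 by linarith),
                Sc_ge_one (show (1:ℝ) ≤ 5*t - 2 by linarith),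
                Sc_nonpos (show 5*t - 4 ≤ 0 by linarith)]
            ring
          refine ⟨-(r * (DSc (5*t - 3) * 5)), ?_⟩
          rw [htt, DSc_ge_one (show (1:ℝ) ≤ 5*t - 1 by linarith)]
          simp [nvec, Real.cos_neg, Real.sin_neg]
        · push_neg at h4
          refine ⟨0, ?_⟩
          rw [DSc_ge_one (show (1:ℝ) ≤ 5*t - 1 by linarith),
              DSc_ge_one (show (1:ℝ) ≤ 5*t - 3 by linarith)]
          simp

lemma joins (r α : ℝ) :
    Curve.Joins ⟨xx r α, tt α⟩ (((0,0),(1,0)) : Pt) ((0, 2*r*Real.sin α), (1,0)) := by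
  refine ⟨?_, ?_, ?_, ?_⟩
  · show xx r α 0 = _
    unfold xx
    rw [Sc_nonpos (show 5*(0:ℝ) - 1 ≤ 0 by norm_num),
        Sc_nonpos (show 5*(0:ℝ) - 3 ≤ 0 by norm_num)]
    simp
    rfl
  · show xx r α 1 = _
    unfold xx
    rw [Sc_ge_one (show (1:ℝ) ≤ 5*(1:ℝ) - 1 by norm_num),
        Sc_ge_one (show (1:ℝ) ≤ 5*(1:ℝ) - 3 by norm_num)]
    simp only [Prod.smul_mk, smul_eq_mul, Prod.mk_sub_mk, Prod.mk.injEq]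
    constructor <;> ring
  · show nvec (tt α 0) = _
    have h0 : tt α 0 = 0 := by
      unfold tt
      rw [Sc_nonpos (show 5*(0:ℝ) - 0 ≤ 0 by norm_num),
          Sc_nonpos (show 5*(0:ℝ) - 2 ≤ 0 by norm_num),
          Sc_nonpos (show 5*(0:ℝ) - 4 ≤ 0 by norm_num)]
      ring
    rw [h0]
    simp [nvec]
  · show nvec (tt α 1) = _
    have h1 : tt α 1 = 0 := by
      unfold tt
      rw [Sc_ge_one (show (1:ℝ) ≤ 5*(1:ℝ) - 0 by norm_num),
          Sc_ge_one (show (1:ℝ) ≤ 5*(1:ℝ) - 2 by norm_num),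
          Sc_ge_one (show (1:ℝ) ≤ 5*(1:ℝ) - 4 by norm_num)]
      ring
    rw [h1]
    simp [nvec]

lemma mem_Gamma0 (r α : ℝ) :
    (⟨xx r α, tt α⟩ : Curve) ∈ Gamma0 (((0,0),(1,0)) : Pt) ((0, 2*r*Real.sin α), (1,0)) :=
  ⟨⟨pc1_xx r α, pc1_tt α⟩, horizontal r α, joins r α⟩

/-! ### The five pieces of the length integral -/

lemma piece1 (ξ r α : ℝ) (hα : 0 < α) :
    ∫ t in (0:ℝ)..(1/5), II ξ r α t = α := by
  have hcg : EqOn (II ξ r α) (fun t => α * (DS (5*t - 0) * 5)) (uIcc (0:ℝ) (1/5)) := by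
    intro t ht
    rw [uIcc_of_le (by norm_num : (0:ℝ) ≤ 1/5)] at ht
    obtain ⟨h0, h1⟩ := ht
    unfold II xx' tt'
    rw [DSc_nonpos (show 5*t - 1 ≤ 0 by linarith),
        DSc_nonpos (show 5*t - 3 ≤ 0 by linarith),
        DSc_mem (show (0:ℝ) ≤ 5*t - 0 by linarith) (show 5*t - 0 ≤ 1 by linarith),
        DSc_nonpos (show 5*t - 2 ≤ 0 by linarith),
        DSc_nonpos (show 5*t - 4 ≤ 0 by linarith)]
    have e : ξ^2 * (dot ((r * (0*5)) • (Real.cos α, Real.sin α)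
        - (r * (0*5)) • (Real.cos α, -Real.sin α)) (nvec (tt α t)))^2
        + (α * (DS (5*t - 0) * 5) - 2*α * (0*5) + α * (0*5))^2
        = (α * (DS (5*t - 0) * 5))^2 := by
      simp [dot]
    rw [e]
    exact Real.sqrt_sq (mul_nonneg hα.le (mul_nonneg
      (DS_nonneg (by linarith) (by linarith)) (by norm_num)))
  rw [intervalIntegral.integral_congr hcg,
    intervalIntegral.integral_eq_sub_of_hasDerivAt
      (f := fun t => α * S (5*t - 0))
      (fun x _ => HasDerivAt.const_mul α (S5_hasDerivAt 0 x))
      ((continuous_const.mul ((DS_continuous.comp (cont_lin 0)).mul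
        continuous_const)).intervalIntegrable _ _)]
  norm_num [S]

lemma piece2 (ξ r α : ℝ) (hξ : 0 < ξ) (hr : 0 < r) :
    ∫ t in (1/5:ℝ)..(2/5), II ξ r α t = ξ * r := by
  have hcg : EqOn (II ξ r α) (fun t => ξ * (r * (DS (5*t - 1) * 5))) (uIcc (1/5:ℝ) (2/5)) := by
    intro t ht
    rw [uIcc_of_le (by norm_num : (1/5:ℝ) ≤ 2/5)] at ht
    obtain ⟨h0, h1⟩ := ht
    have htt : tt α t = α := by
      unfold tt
      rw [Sc_ge_one (show (1:ℝ) ≤ 5*t - 0 by linarith),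
          Sc_nonpos (show 5*t - 2 ≤ 0 by linarith),
          Sc_nonpos (show 5*t - 4 ≤ 0 by linarith)]
      ring
    unfold II xx' tt'
    rw [htt,
        DSc_mem (show (0:ℝ) ≤ 5*t - 1 by linarith) (show 5*t - 1 ≤ 1 by linarith),
        DSc_nonpos (show 5*t - 3 ≤ 0 by linarith),
        DSc_ge_one (show (1:ℝ) ≤ 5*t - 0 by linarith),
        DSc_nonpos (show 5*t - 2 ≤ 0 by linarith),
        DSc_nonpos (show 5*t - 4 ≤ 0 by linarith)]
    have ed : dot ((r * (DS (5*t - 1) * 5)) • (Real.cos α, Real.sin α)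
        - (r * (0*5)) • (Real.cos α, -Real.sin α)) (nvec α) = r * (DS (5*t - 1) * 5) := by
      simp only [dot, nvec, Prod.smul_mk, smul_eq_mul, Prod.mk_sub_mk, mul_zero, zero_mul,
        sub_zero]
      linear_combination (r * (DS (5*t - 1) * 5)) * Real.sin_sq_add_cos_sq α
    rw [ed]
    have e : ξ^2 * (r * (DS (5*t - 1) * 5))^2
        + (α * (0*5) - 2*α * (0*5) + α * (0*5))^2
        = (ξ * (r * (DS (5*t - 1) * 5)))^2 := by ring
    rw [e]
    exact Real.sqrt_sq (mul_nonneg hξ.le (mul_nonneg hr.le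
      (mul_nonneg (DS_nonneg (by linarith) (by linarith)) (by norm_num))))
  rw [intervalIntegral.integral_congr hcg,
    intervalIntegral.integral_eq_sub_of_hasDerivAt
      (f := fun t => ξ * (r * S (5*t - 1)))
      (fun x _ => HasDerivAt.const_mul ξ (HasDerivAt.const_mul r (S5_hasDerivAt 1 x)))
      ((continuous_const.mul (continuous_const.mul
        ((DS_continuous.comp (cont_lin 1)).mul continuous_const))).intervalIntegrable _ _)]
  norm_num [S]

lemma piece3 (ξ r α : ℝ) (hα : 0 < α) :
    ∫ t in (2/5:ℝ)..(3/5), II ξ r α t = 2*α := by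
  have hcg : EqOn (II ξ r α) (fun t => 2*α * (DS (5*t - 2) * 5)) (uIcc (2/5:ℝ) (3/5)) := by
    intro t ht
    rw [uIcc_of_le (by norm_num : (2/5:ℝ) ≤ 3/5)] at ht
    obtain ⟨h0, h1⟩ := ht
    unfold II xx' tt'
    rw [DSc_ge_one (show (1:ℝ) ≤ 5*t - 1 by linarith),
        DSc_nonpos (show 5*t - 3 ≤ 0 by linarith),
        DSc_ge_one (show (1:ℝ) ≤ 5*t - 0 by linarith),
        DSc_mem (show (0:ℝ) ≤ 5*t - 2 by linarith) (show 5*t - 2 ≤ 1 by linarith),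
        DSc_nonpos (show 5*t - 4 ≤ 0 by linarith)]
    have e : ξ^2 * (dot ((r * (0*5)) • (Real.cos α, Real.sin α)
        - (r * (0*5)) • (Real.cos α, -Real.sin α)) (nvec (tt α t)))^2
        + (α * (0*5) - 2*α * (DS (5*t - 2) * 5) + α * (0*5))^2
        = (2*α * (DS (5*t - 2) * 5))^2 := by
      simp [dot]
    rw [e]
    exact Real.sqrt_sq (mul_nonneg (by linarith) (mul_nonneg
      (DS_nonneg (by linarith) (by linarith)) (by norm_num)))
  rw [intervalIntegral.integral_congr hcg,
    intervalIntegral.integral_eq_sub_of_hasDerivAt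
      (f := fun t => 2*α * S (5*t - 2))
      (fun x _ => HasDerivAt.const_mul (2*α) (S5_hasDerivAt 2 x))
      ((continuous_const.mul ((DS_continuous.comp (cont_lin 2)).mul
        continuous_const)).intervalIntegrable _ _)]
  norm_num [S]

lemma piece4 (ξ r α : ℝ) (hξ : 0 < ξ) (hr : 0 < r) :
    ∫ t in (3/5:ℝ)..(4/5), II ξ r α t = ξ * r := by
  have hcg : EqOn (II ξ r α) (fun t => ξ * (r * (DS (5*t - 3) * 5))) (uIcc (3/5:ℝ) (4/5)) := by
    intro t ht
    rw [uIcc_of_le (by norm_num : (3/5:ℝ) ≤ 4/5)] at ht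
    obtain ⟨h0, h1⟩ := ht
    have htt : tt α t = -α := by
      unfold tt
      rw [Sc_ge_one (show (1:ℝ) ≤ 5*t - 0 by linarith),
          Sc_ge_one (show (1:ℝ) ≤ 5*t - 2 by linarith),
          Sc_nonpos (show 5*t - 4 ≤ 0 by linarith)]
      ring
    unfold II xx' tt'
    rw [htt,
        DSc_ge_one (show (1:ℝ) ≤ 5*t - 1 by linarith),
        DSc_mem (show (0:ℝ) ≤ 5*t - 3 by linarith) (show 5*t - 3 ≤ 1 by linarith),
        DSc_ge_one (show (1:ℝ) ≤ 5*t - 0 by linarith),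
        DSc_ge_one (show (1:ℝ) ≤ 5*t - 2 by linarith),
        DSc_nonpos (show 5*t - 4 ≤ 0 by linarith)]
    have ed : dot ((r * (0*5)) • (Real.cos α, Real.sin α)
        - (r * (DS (5*t - 3) * 5)) • (Real.cos α, -Real.sin α)) (nvec (-α))
        = -(r * (DS (5*t - 3) * 5)) := by
      simp only [dot, nvec, Real.cos_neg, Real.sin_neg, Prod.smul_mk, smul_eq_mul,
        Prod.mk_sub_mk, mul_zero, zero_mul, zero_sub]
      linear_combination (-(r * (DS (5*t - 3) * 5))) * Real.sin_sq_add_cos_sq α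
    rw [ed]
    have e : ξ^2 * (-(r * (DS (5*t - 3) * 5)))^2
        + (α * (0*5) - 2*α * (0*5) + α * (0*5))^2
        = (ξ * (r * (DS (5*t - 3) * 5)))^2 := by ring
    rw [e]
    exact Real.sqrt_sq (mul_nonneg hξ.le (mul_nonneg hr.le
      (mul_nonneg (DS_nonneg (by linarith) (by linarith)) (by norm_num))))
  rw [intervalIntegral.integral_congr hcg,
    intervalIntegral.integral_eq_sub_of_hasDerivAt
      (f := fun t => ξ * (r * S (5*t - 3)))
      (fun x _ => HasDerivAt.const_mul ξ (HasDerivAt.const_mul r (S5_hasDerivAt 3 x)))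
      ((continuous_const.mul (continuous_const.mul
        ((DS_continuous.comp (cont_lin 3)).mul continuous_const))).intervalIntegrable _ _)]
  norm_num [S]

lemma piece5 (ξ r α : ℝ) (hα : 0 < α) :
    ∫ t in (4/5:ℝ)..1, II ξ r α t = α := by
  have hcg : EqOn (II ξ r α) (fun t => α * (DS (5*t - 4) * 5)) (uIcc (4/5:ℝ) 1) := by
    intro t ht
    rw [uIcc_of_le (by norm_num : (4/5:ℝ) ≤ 1)] at ht
    obtain ⟨h0, h1⟩ := ht
    unfold II xx' tt'
    rw [DSc_ge_one (show (1:ℝ) ≤ 5*t - 1 by linarith),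
        DSc_ge_one (show (1:ℝ) ≤ 5*t - 3 by linarith),
        DSc_ge_one (show (1:ℝ) ≤ 5*t - 0 by linarith),
        DSc_ge_one (show (1:ℝ) ≤ 5*t - 2 by linarith),
        DSc_mem (show (0:ℝ) ≤ 5*t - 4 by linarith) (show 5*t - 4 ≤ 1 by linarith)]
    have e : ξ^2 * (dot ((r * (0*5)) • (Real.cos α, Real.sin α)
        - (r * (0*5)) • (Real.cos α, -Real.sin α)) (nvec (tt α t)))^2
        + (α * (0*5) - 2*α * (0*5) + α * (DS (5*t - 4) * 5))^2
        = (α * (DS (5*t - 4) * 5))^2 := by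
      simp [dot]
    rw [e]
    exact Real.sqrt_sq (mul_nonneg hα.le (mul_nonneg
      (DS_nonneg (by linarith) (by linarith)) (by norm_num)))
  rw [intervalIntegral.integral_congr hcg,
    intervalIntegral.integral_eq_sub_of_hasDerivAt
      (f := fun t => α * S (5*t - 4))
      (fun x _ => HasDerivAt.const_mul α (S5_hasDerivAt 4 x))
      ((continuous_const.mul ((DS_continuous.comp (cont_lin 4)).mul
        continuous_const)).intervalIntegrable _ _)]
  norm_num [S]

lemma length_eq (ξ r α : ℝ) (hξ : 0 < ξ) (hr : 0 < r) (hα : 0 < α) :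
    length ξ (fun _ => (1:ℝ)) ⟨xx r α, tt α⟩ = 4*α + 2*(ξ*r) := by
  have hlen : length ξ (fun _ => (1:ℝ)) ⟨xx r α, tt α⟩ = ∫ t in (0:ℝ)..1, II ξ r α t := by
    unfold length Curve.u1 Curve.u3 II
    refine intervalIntegral.integral_congr fun t _ => ?_
    dsimp only
    rw [deriv_xx, deriv_tt, one_mul]
  have hint : ∀ a b : ℝ, IntervalIntegrable (II ξ r α) volume a b :=
    fun a b => (II_continuous ξ r α).intervalIntegrable a b
  have e1 := intervalIntegral.integral_add_adjacent_intervals (hint 0 (1/5)) (hint (1/5) (2/5))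
  have e2 := intervalIntegral.integral_add_adjacent_intervals (hint 0 (2/5)) (hint (2/5) (3/5))
  have e3 := intervalIntegral.integral_add_adjacent_intervals (hint 0 (3/5)) (hint (3/5) (4/5))
  have e4 := intervalIntegral.integral_add_adjacent_intervals (hint 0 (4/5)) (hint (4/5) 1)
  rw [hlen, ← e4, ← e3, ← e2, ← e1, piece1 ξ r α hα, piece2 ξ r α hξ hr,
    piece3 ξ r α hα, piece4 ξ r α hξ hr, piece5 ξ r α hα]
  ring

/-! ### The distance bound -/

lemma dF0_le (ξ ε α : ℝ) (hξ : 0 < ξ) (hε : 0 < ε) (hα : 0 < α) (hα2 : α ≤ Real.pi/2) :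
    dF0 ξ (fun _ => 1) (((0,0),(1,0)) : Pt) ((0, ε), (1,0)) ≤
      ENNReal.ofReal (4*α + ξ*ε/Real.sin α) := by
  have hsin : 0 < Real.sin α :=
    Real.sin_pos_of_pos_of_lt_pi hα (lt_of_le_of_lt hα2 (half_lt_self Real.pi_pos))
  set r := ε / (2*Real.sin α) with hrdef
  have hr : 0 < r := div_pos hε (by linarith)
  have hε' : 2*r*Real.sin α = ε := by
    rw [hrdef]; field_simp
  have hmem := mem_Gamma0 r α
  rw [hε'] at hmem
  have hle : dF0 ξ (fun _ => 1) (((0,0),(1,0)) : Pt) ((0, ε), (1,0)) ≤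
      ENNReal.ofReal (length ξ (fun _ => 1) ⟨xx r α, tt α⟩) := by
    unfold dF0
    exact iInf₂_le _ hmem
  refine le_trans hle (le_of_eq ?_)
  rw [length_eq ξ r α hξ hr hα]
  congr 1
  rw [hrdef]
  field_simp

end Lateral

/-- local controllability of `d_proj` in the lateral direction. -/
theorem dproj_lateral_limit (ξ : ℝ) (hξ : 0 < ξ) :
    (∀ ε : ℝ, 0 < ε → ∀ α : ℝ, α ∈ Ioc (0 : ℝ) (Real.pi / 2) →
      dproj ξ (fun _ => 1) (((0, 0), (1, 0)) : Pt) ((0, ε), (1, 0)) ≤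
        dF0 ξ (fun _ => 1) (((0, 0), (1, 0)) : Pt) ((0, ε), (1, 0)) ∧
      dF0 ξ (fun _ => 1) (((0, 0), (1, 0)) : Pt) ((0, ε), (1, 0)) ≤
        ENNReal.ofReal (4 * α + ξ * ε / Real.sin α)) ∧
    Filter.Tendsto
      (fun ε : ℝ => dproj ξ (fun _ => 1) (((0, 0), (1, 0)) : Pt) ((0, ε), (1, 0)))
      (nhdsWithin 0 (Ioi 0)) (nhds 0) := by
  have hd : ∀ ε : ℝ, dproj ξ (fun _ => 1) (((0, 0), (1, 0)) : Pt) ((0, ε), (1, 0)) ≤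
      dF0 ξ (fun _ => 1) (((0, 0), (1, 0)) : Pt) ((0, ε), (1, 0)) := by
    intro ε
    unfold dproj
    exact le_trans (min_le_left _ _) (min_le_left _ _)
  have hb : ∀ ε : ℝ, 0 < ε → ∀ α : ℝ, 0 < α → α ≤ Real.pi / 2 →
      dF0 ξ (fun _ => 1) (((0, 0), (1, 0)) : Pt) ((0, ε), (1, 0)) ≤
        ENNReal.ofReal (4 * α + ξ * ε / Real.sin α) := by
    intro ε hε α hα1 hα2
    have := Lateral.dF0_le ξ ε α hξ hε hα1 hα2
    convert this using 2
  constructor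
  · intro ε hε α hα
    exact ⟨hd ε, hb ε hε α hα.1 hα.2⟩
  · have key : ∀ ε ∈ Ioo (0:ℝ) 1,
        dproj ξ (fun _ => 1) (((0, 0), (1, 0)) : Pt) ((0, ε), (1, 0)) ≤
          ENNReal.ofReal ((4 + 4*ξ/3) * Real.sqrt ε) := by
      intro ε hε
      have hs0 : 0 < Real.sqrt ε := Real.sqrt_pos.mpr hε.1
      have hs1 : Real.sqrt ε ≤ 1 := Real.sqrt_le_one.mpr hε.2.le
      have hsπ : Real.sqrt ε ≤ Real.pi/2 := le_trans hs1 (by linarith [Real.two_le_pi])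
      have hsin : (3/4) * Real.sqrt ε < Real.sin (Real.sqrt ε) := by
        have h := Real.sin_gt_sub_cube hs0
        nlinarith [h, hs0.le, hs1, sq_nonneg (Real.sqrt ε)]
      have hsinpos : 0 < Real.sin (Real.sqrt ε) := lt_trans (by positivity) hsin
      refine le_trans (hd ε) (le_trans (hb ε hε.1 (Real.sqrt ε) hs0 hsπ) ?_)
      apply ENNReal.ofReal_le_ofReal
      have h2 : ξ*ε/Real.sin (Real.sqrt ε) ≤ (4*ξ/3) * Real.sqrt ε := by
        rw [div_le_iff₀ hsinpos]
        nlinarith [Real.sq_sqrt hε.1.le, Real.sqrt_nonneg ε,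
          mul_le_mul_of_nonneg_left hsin.le (by positivity : (0:ℝ) ≤ 4*ξ/3)]
      nlinarith [Real.sqrt_nonneg ε, h2]
    refine tendsto_of_tendsto_of_tendsto_of_le_of_le'
      (h := fun ε : ℝ => ENNReal.ofReal ((4 + 4*ξ/3) * Real.sqrt ε)) tendsto_const_nhds ?_ ?_ ?_
    · have hreal : Filter.Tendsto (fun ε : ℝ => (4 + 4*ξ/3) * Real.sqrt ε)
          (nhdsWithin 0 (Ioi 0)) (nhds 0) := by
        have h0 : Filter.Tendsto Real.sqrt (nhds 0) (nhds 0) := by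
          have := Real.continuous_sqrt.tendsto 0
          rwa [Real.sqrt_zero] at this
        have h1 := (h0.mono_left (nhdsWithin_le_nhds (s := Ioi (0:ℝ)))).const_mul (4 + 4*ξ/3)
        simpa using h1
      have h2 := ENNReal.tendsto_ofReal hreal
      simpa using h2
    · exact Filter.Eventually.of_forall fun ε => zero_le
    · filter_upwards [Ioo_mem_nhdsGT_of_mem
        (show (0:ℝ) ∈ Ico (0:ℝ) 1 by constructor <;> norm_num)] with ε hε using key ε hε

end
end

section
/- Dual Finsler function of the forward Reeds–Shepp model (Eq. (H0plus)): Fix ξ > 0 and c > 0, and for a ∈ ℝ write (a)₊ := max{a, 0}. Then for all real numbers a, b: sup{ (a·u¹ + b·u³) / ( c·√(ξ²·(u¹)² + (u³)²) ) : (u¹, u³) ∈ ℝ², u¹ ≥ 0, (u¹, u³) ≠ (0, 0) } = (1/c)·√( ξ⁻²·((a)₊)² + b² ). -/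
open Set MeasureTheory
open scoped ENNReal

noncomputable section

/-- dual Finsler function of the forward Reeds–Shepp model. -/
theorem dual_finsler_forward (ξ c : ℝ) (hξ : 0 < ξ) (hc : 0 < c) (a b : ℝ) :
    sSup {v : ℝ | ∃ w₁ w₃ : ℝ, 0 ≤ w₁ ∧ (w₁, w₃) ≠ (0, 0) ∧
        v = (a * w₁ + b * w₃) / (c * Real.sqrt (ξ ^ 2 * w₁ ^ 2 + w₃ ^ 2))} =
      (1 / c) * Real.sqrt (ξ⁻¹ ^ 2 * max a 0 ^ 2 + b ^ 2) := by
  have hξ' : ξ ≠ 0 := hξ.ne'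
  set m := max a 0 with hm
  have hm0 : 0 ≤ m := le_max_right a 0
  set S := Real.sqrt (ξ⁻¹ ^ 2 * m ^ 2 + b ^ 2) with hS
  have hS0 : 0 ≤ S := Real.sqrt_nonneg _
  have hSsq : S ^ 2 = ξ⁻¹ ^ 2 * m ^ 2 + b ^ 2 := Real.sq_sqrt (by positivity)
  have ham : a * m = m ^ 2 := by
    rcases le_or_gt a 0 with h | h
    · simp [hm, max_eq_right h]
    · simp [hm, max_eq_left h.le]; ring
  apply IsGreatest.csSup_eq
  constructor
  · -- membership
    by_cases h : m = 0 ∧ b = 0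
    · obtain ⟨hm', hb⟩ := h
      refine ⟨0, 1, le_refl 0, by simp, ?_⟩
      have hs0 : S = 0 := by rw [hS, hm', hb]; simp
      rw [hs0, hb]
      simp
    · have hpos : 0 < ξ⁻¹ ^ 2 * m ^ 2 + b ^ 2 := by
        rcases not_and_or.mp h with h' | h'
        · have : 0 < m ^ 2 := by positivity
          nlinarith [sq_nonneg b, sq_nonneg ξ⁻¹, pow_pos (inv_pos.mpr hξ) 2]
        · nlinarith [sq_nonneg (ξ⁻¹ * m), sq_nonneg b, pow_pos (inv_pos.mpr hξ) 2,
            sq_nonneg m, mul_nonneg (sq_nonneg ξ⁻¹) (sq_nonneg m), sq_pos_of_ne_zero h']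
      have hSpos : 0 < S := Real.sqrt_pos.mpr hpos
      refine ⟨ξ⁻¹ ^ 2 * m, b, by positivity, ?_, ?_⟩
      · intro hcon
        rw [Prod.mk.injEq] at hcon
        obtain ⟨h1, h2⟩ := hcon
        have hmz : m = 0 := by
          have : ξ⁻¹ ^ 2 ≠ 0 := by positivity
          exact (mul_eq_zero.mp h1).resolve_left this
        exact h ⟨hmz, h2⟩
      · have hr : ξ ^ 2 * (ξ⁻¹ ^ 2 * m) ^ 2 + b ^ 2 = ξ⁻¹ ^ 2 * m ^ 2 + b ^ 2 := by
          field_simp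
        have hnum : a * (ξ⁻¹ ^ 2 * m) + b * b = S ^ 2 := by
          rw [hSsq]; nlinarith [ham]
        rw [hr, ← hS, hnum]
        rw [pow_two]
        field_simp
  · -- upper bound
    rintro v ⟨w₁, w₃, hw1, hne, rfl⟩
    set r := Real.sqrt (ξ ^ 2 * w₁ ^ 2 + w₃ ^ 2) with hr
    have hwpos : 0 < ξ ^ 2 * w₁ ^ 2 + w₃ ^ 2 := by
      have : w₁ ≠ 0 ∨ w₃ ≠ 0 := by
        by_contra hcon
        push_neg at hcon
        exact hne (by simp [hcon.1, hcon.2])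
      rcases this with h' | h'
      · have : 0 < w₁ ^ 2 := by positivity
        nlinarith [sq_nonneg w₃, pow_pos hξ 2]
      · nlinarith [sq_nonneg (ξ * w₁), sq_pos_of_ne_zero h',
          mul_nonneg (sq_nonneg ξ) (sq_nonneg w₁)]
    have hrpos : 0 < r := Real.sqrt_pos.mpr hwpos
    have hrsq : r ^ 2 = ξ ^ 2 * w₁ ^ 2 + w₃ ^ 2 := Real.sq_sqrt hwpos.le
    have h1 : a * w₁ ≤ m * w₁ := mul_le_mul_of_nonneg_right (le_max_left a 0) hw1
    have key : (m * w₁ + b * w₃) ^ 2 + (ξ⁻¹ * m * w₃ - ξ * b * w₁) ^ 2 = S ^ 2 * r ^ 2 := by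
      rw [hSsq, hrsq]
      field_simp
      ring
    have h2 : (m * w₁ + b * w₃) ^ 2 ≤ (S * r) ^ 2 := by
      nlinarith [sq_nonneg (ξ⁻¹ * m * w₃ - ξ * b * w₁)]
    have h3 : m * w₁ + b * w₃ ≤ S * r :=
      calc m * w₁ + b * w₃ ≤ |m * w₁ + b * w₃| := le_abs_self _
        _ = Real.sqrt ((m * w₁ + b * w₃) ^ 2) := (Real.sqrt_sq_eq_abs _).symm
        _ ≤ Real.sqrt ((S * r) ^ 2) := Real.sqrt_le_sqrt h2
        _ = S * r := Real.sqrt_sq (by positivity)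
    have hnum : a * w₁ + b * w₃ ≤ S * r := le_trans (add_le_add_left h1 _) h3
    have hden : 0 < c * r := by positivity
    calc (a * w₁ + b * w₃) / (c * r) ≤ (S * r) / (c * r) := by
          exact div_le_div_of_nonneg_right hnum hden.le
      _ = 1 / c * S := by field_simp

end
end
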